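/- arXiv:2203.15993 — 2 statements merged into one kernel-verified Lean document; each statement's English description precedes it below -/
import Mathlib

section
/- Let ρ, σ be density matrices, β ∈ (0,1], and f: ℝ → [0,1] with f(x)=0 for x<α and f(x)=1 for x≥β (0 ≤ α ≤ β). Then F(ρ,σ) - F(f(ρ)·ρ, σ) ≤ sqrt(Tr[Π_{[0,β)}ρΠ_{[0,β)}]) · sqrt(Tr[Π_{[0,β)}σΠ_{[0,β)}]), where Π_{[0,β)} is the spectral projector of ρ onto eigenvalues in [0,β). -/
open Matrix ComplexOrder

attribute [local instance] Classical.propDecidable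

/-- Square root of a positive semidefinite matrix (junk value `0` otherwise). -/
noncomputable def psqrt {d : ℕ} (X : Matrix (Fin d) (Fin d) ℂ) : Matrix (Fin d) (Fin d) ℂ :=
  if h : X.PosSemidef then
    h.1.eigenvectorUnitary.1 * diagonal ((↑) ∘ (√·) ∘ h.1.eigenvalues) *
      (star h.1.eigenvectorUnitary : Matrix (Fin d) (Fin d) ℂ)
  else 0

/-- Schatten 1-norm (trace norm): `‖M‖₁ = Tr √(Mᴴ M)`. -/
noncomputable def traceNorm {d : ℕ} (M : Matrix (Fin d) (Fin d) ℂ) : ℝ :=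
  (psqrt (Mᴴ * M)).trace.re

/-- Fidelity `F(X, σ) = Tr √(√σ X √σ)` of positive semidefinite matrices. -/
noncomputable def fid {d : ℕ} (X σ : Matrix (Fin d) (Fin d) ℂ) : ℝ :=
  (psqrt (psqrt σ * X * psqrt σ)).trace.re

namespace Aux
variable {d : ℕ} {A : Matrix (Fin d) (Fin d) ℂ} (hA : A.IsHermitian)

local notation "U" => (Matrix.IsHermitian.eigenvectorUnitary hA : Matrix (Fin d) (Fin d) ℂ)

lemma star_mul_self : star U * U = 1 := mem_unitaryGroup_iff'.mp (hA.eigenvectorUnitary).2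
lemma mul_star_self : U * star U = 1 := mem_unitaryGroup_iff.mp (hA.eigenvectorUnitary).2

lemma cfc_mul (f g : ℝ → ℝ) :
    hA.cfc f * hA.cfc g = hA.cfc (fun x => f x * g x) := by
  unfold Matrix.IsHermitian.cfc
  have h1 : star U * U = 1 := star_mul_self hA
  calc (U * diagonal (RCLike.ofReal ∘ f ∘ hA.eigenvalues) * star U) *
        (U * diagonal (RCLike.ofReal ∘ g ∘ hA.eigenvalues) * star U)
      = U * (diagonal (RCLike.ofReal ∘ f ∘ hA.eigenvalues) * ((star U * U) *
          diagonal (RCLike.ofReal ∘ g ∘ hA.eigenvalues))) * star U := by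
        simp only [mul_assoc]
    _ = U * diagonal (RCLike.ofReal ∘ (fun x => f x * g x) ∘ hA.eigenvalues) * star U := by
        rw [h1, one_mul, diagonal_mul_diagonal]
        have : (fun i => ((RCLike.ofReal : ℝ → ℂ) ∘ f ∘ hA.eigenvalues) i * (RCLike.ofReal ∘ g ∘ hA.eigenvalues) i)
            = (RCLike.ofReal ∘ (fun x => f x * g x) ∘ hA.eigenvalues) := by
          funext i; simp
        rw [this]
  
lemma cfc_congr {f g : ℝ → ℝ} (h : ∀ i, f (hA.eigenvalues i) = g (hA.eigenvalues i)) :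
    hA.cfc f = hA.cfc g := by
  unfold Matrix.IsHermitian.cfc
  have : ((RCLike.ofReal : ℝ → ℂ) ∘ f ∘ hA.eigenvalues) = ((RCLike.ofReal : ℝ → ℂ) ∘ g ∘ hA.eigenvalues) := by
    funext i; simp [h i]
  rw [this]

lemma cfc_id : hA.cfc (fun x => x) = A := by
  conv_rhs => rw [hA.spectral_theorem]
  rfl

lemma cfc_one : hA.cfc (fun _ => 1) = 1 := by
  unfold Matrix.IsHermitian.cfc
  have : (RCLike.ofReal ∘ (fun (_ : ℝ) => (1:ℝ)) ∘ hA.eigenvalues) = fun _ => (1 : ℂ) := by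
    funext i; simp
  simp only [Unitary.conjStarAlgAut_apply]
  rw [this, diagonal_one, mul_one, mul_star_self hA]

lemma cfc_zero : hA.cfc (fun _ => 0) = 0 := by
  unfold Matrix.IsHermitian.cfc
  have : (RCLike.ofReal ∘ (fun (_ : ℝ) => (0:ℝ)) ∘ hA.eigenvalues) = fun _ => (0 : ℂ) := by
    funext i; simp
  simp only [Unitary.conjStarAlgAut_apply]
  rw [this, diagonal_zero, mul_zero, zero_mul]

lemma cfc_add (f g : ℝ → ℝ) :
    hA.cfc f + hA.cfc g = hA.cfc (fun x => f x + g x) := by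
  unfold Matrix.IsHermitian.cfc
  simp only [Unitary.conjStarAlgAut_apply]
  rw [← add_mul, ← mul_add, diagonal_add]
  have : (fun i => ((RCLike.ofReal : ℝ → ℂ) ∘ f ∘ hA.eigenvalues) i + (RCLike.ofReal ∘ g ∘ hA.eigenvalues) i)
      = (RCLike.ofReal ∘ (fun x => f x + g x) ∘ hA.eigenvalues) := by funext i; simp
  rw [this]

lemma cfc_sub (f g : ℝ → ℝ) :
    hA.cfc f - hA.cfc g = hA.cfc (fun x => f x - g x) := by
  unfold Matrix.IsHermitian.cfc
  simp only [Unitary.conjStarAlgAut_apply]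
  rw [← sub_mul, ← mul_sub, diagonal_sub]
  have : (fun i => ((RCLike.ofReal : ℝ → ℂ) ∘ f ∘ hA.eigenvalues) i - (RCLike.ofReal ∘ g ∘ hA.eigenvalues) i)
      = (RCLike.ofReal ∘ (fun x => f x - g x) ∘ hA.eigenvalues) := by funext i; simp
  rw [this]

lemma cfc_herm (f : ℝ → ℝ) : (hA.cfc f).IsHermitian := by
  unfold Matrix.IsHermitian.cfc
  unfold Matrix.IsHermitian
  simp only [Unitary.conjStarAlgAut_apply]
  rw [conjTranspose_mul, conjTranspose_mul, diagonal_conjTranspose, ← star_eq_conjTranspose,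
    ← star_eq_conjTranspose, star_star, mul_assoc]
  have : (star ((RCLike.ofReal : ℝ → ℂ) ∘ f ∘ hA.eigenvalues))
      = ((RCLike.ofReal : ℝ → ℂ) ∘ f ∘ hA.eigenvalues) := by
    funext i; simp [Pi.star_apply, RCLike.star_def, RCLike.conj_ofReal]
  rw [this, ← mul_assoc]

lemma cfc_trace (f : ℝ → ℝ) :
    (hA.cfc f).trace = ∑ i, (f (hA.eigenvalues i) : ℂ) := by
  unfold Matrix.IsHermitian.cfc
  simp only [Unitary.conjStarAlgAut_apply]
  rw [trace_mul_comm, ← mul_assoc, star_mul_self hA, one_mul, trace_diagonal]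
  rfl

lemma cfc_trace_re (f : ℝ → ℝ) :
    (hA.cfc f).trace.re = ∑ i, f (hA.eigenvalues i) := by
  rw [cfc_trace hA f, Complex.re_sum]
  simp

lemma cfc_posSemidef {f : ℝ → ℝ} (h : ∀ i, 0 ≤ f (hA.eigenvalues i)) :
    (hA.cfc f).PosSemidef := by
  unfold Matrix.IsHermitian.cfc
  simp only [Unitary.conjStarAlgAut_apply]
  rw [star_eq_conjTranspose]
  apply Matrix.PosSemidef.mul_mul_conjTranspose_same
  rw [posSemidef_diagonal_iff]
  intro i
  simp only [Function.comp_apply]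
  exact RCLike.ofReal_nonneg.mpr (h i)

lemma cfc_posSemidef_rev {f : ℝ → ℝ} (h : (hA.cfc f).PosSemidef) :
    ∀ i, 0 ≤ f (hA.eigenvalues i) := by
  intro i
  have h2 : (star U * (hA.cfc f) * U).PosSemidef := by
    rw [star_eq_conjTranspose (M := U)]
    exact h.conjTranspose_mul_mul_same U
  have : star U * (hA.cfc f) * U = diagonal (RCLike.ofReal ∘ f ∘ hA.eigenvalues) := by
    unfold Matrix.IsHermitian.cfc
    calc star U * (U * diagonal (RCLike.ofReal ∘ f ∘ hA.eigenvalues) * star U) * U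
        = (star U * U) * diagonal (RCLike.ofReal ∘ f ∘ hA.eigenvalues) * (star U * U) := by
          simp only [mul_assoc]
      _ = _ := by rw [star_mul_self hA, one_mul, mul_one]
  rw [this, posSemidef_diagonal_iff] at h2
  have := h2 i
  simp only [Function.comp_apply] at this
  exact RCLike.ofReal_nonneg.mp this



lemma cfc_mul_A (f : ℝ → ℝ) : hA.cfc f * A = hA.cfc (fun x => f x * x) := by
  have h := cfc_mul hA f (fun x => x)
  rw [cfc_id hA] at h
  exact h

lemma A_mul_cfc (f : ℝ → ℝ) : A * hA.cfc f = hA.cfc (fun x => x * f x) := by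
  have h := cfc_mul hA (fun x => x) f
  rw [cfc_id hA] at h
  exact h

lemma cfc_conj (f g : ℝ → ℝ) :
    hA.cfc f * A * hA.cfc g = hA.cfc (fun x => f x * x * g x) := by
  rw [cfc_mul_A hA f]
  have h := cfc_mul hA (fun x => f x * x) g
  exact h


open scoped MatrixOrder in
lemma psd_sqrt_unique {d : ℕ} {B X : Matrix (Fin d) (Fin d) ℂ} (hB : B.PosSemidef) (hX : X.PosSemidef)
    (h : B ^ 2 = X) : hX.1.cfc Real.sqrt = B := by
  rw [← hX.1.cfc_eq, ← cfcₙ_eq_cfc, ← CFC.sqrt_eq_real_sqrt X hX.nonneg,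
    CFC.sqrt_eq_iff X B hX.nonneg hB.nonneg, ← sq, h]

section psqrtsec
variable {d : ℕ} {X : Matrix (Fin d) (Fin d) ℂ}

lemma psqrt_of_posSemidef (hX : X.PosSemidef) : psqrt X = hX.1.cfc Real.sqrt := by
  rw [psqrt, dif_pos hX]; rfl

lemma psqrt_posSemidef (hX : X.PosSemidef) : (psqrt X).PosSemidef := by
  rw [psqrt_of_posSemidef hX]; exact cfc_posSemidef hX.1 (fun i => Real.sqrt_nonneg _)

lemma psqrt_mul_self (hX : X.PosSemidef) : psqrt X * psqrt X = X := by
  rw [psqrt_of_posSemidef hX, cfc_mul]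
  calc hX.1.cfc (fun x => Real.sqrt x * Real.sqrt x)
      = hX.1.cfc (fun x => x) :=
        cfc_congr hX.1 (fun i => Real.mul_self_sqrt (hX.eigenvalues_nonneg i))
    _ = X := cfc_id hX.1

lemma psqrt_herm (hX : X.PosSemidef) : (psqrt X)ᴴ = psqrt X := (psqrt_posSemidef hX).1

lemma psqrt_eq_cfc (hX : X.PosSemidef) : psqrt X = hX.1.cfc Real.sqrt := by
  rw [psqrt_of_posSemidef hX]

lemma trace_re_AhA_eq (A : Matrix (Fin d) (Fin d) ℂ) :
    (Aᴴ * A).trace.re = ∑ j, ∑ i, Complex.normSq (A i j) := by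
  rw [Matrix.trace, Complex.re_sum]
  refine Finset.sum_congr rfl fun j _ => ?_
  rw [Matrix.diag_apply, Matrix.mul_apply, Complex.re_sum]
  refine Finset.sum_congr rfl fun i _ => ?_
  rw [Matrix.conjTranspose_apply, Complex.star_def, mul_comm, Complex.mul_conj]
  simp

lemma trace_re_AhA_nonneg (A : Matrix (Fin d) (Fin d) ℂ) : 0 ≤ (Aᴴ * A).trace.re := by
  rw [trace_re_AhA_eq]
  exact Finset.sum_nonneg fun j _ => Finset.sum_nonneg fun i _ => Complex.normSq_nonneg _

lemma eq_zero_of_trace_AhA {A : Matrix (Fin d) (Fin d) ℂ} (h : (Aᴴ * A).trace.re = 0) :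
    A = 0 := by
  rw [trace_re_AhA_eq] at h
  ext i j
  have h1 := (Finset.sum_eq_zero_iff_of_nonneg
    (fun j _ => Finset.sum_nonneg fun i _ => Complex.normSq_nonneg (A i j))).mp h j (by simp)
  have h2 := (Finset.sum_eq_zero_iff_of_nonneg
    (fun i _ => Complex.normSq_nonneg (A i j))).mp h1 i (by simp)
  simpa using Complex.normSq_eq_zero.mp h2

lemma trace_re_nonneg_of_psd (hX : X.PosSemidef) : 0 ≤ X.trace.re := by
  have e : X = (psqrt X)ᴴ * psqrt X := by rw [psqrt_herm hX, psqrt_mul_self hX]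
  rw [e]; exact trace_re_AhA_nonneg _

lemma trace_congr_mono {E : Matrix (Fin d) (Fin d) ℂ} (hE : (1 - E).PosSemidef)
    (A : Matrix (Fin d) (Fin d) ℂ) :
    (A * E * Aᴴ).trace.re ≤ (A * Aᴴ).trace.re := by
  have h1 : (A * (1 - E) * Aᴴ).PosSemidef := hE.mul_mul_conjTranspose_same A
  have h2 : 0 ≤ (A * (1 - E) * Aᴴ).trace.re := trace_re_nonneg_of_psd h1
  have e : A * (1 - E) * Aᴴ = A * Aᴴ - A * E * Aᴴ := by noncomm_ring
  rw [e, trace_sub, Complex.sub_re] at h2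
  linarith

lemma contraction_flip {C : Matrix (Fin d) (Fin d) ℂ} (h : (1 - Cᴴ * C).PosSemidef) :
    (1 - C * Cᴴ).PosSemidef := by
  have hX : (C * Cᴴ).PosSemidef := posSemidef_self_mul_conjTranspose C
  have hXX : (C * Cᴴ - (C * Cᴴ) * (C * Cᴴ)).PosSemidef := by
    have h2 := h.mul_mul_conjTranspose_same C
    have e : C * (1 - Cᴴ * C) * Cᴴ = C * Cᴴ - (C * Cᴴ) * (C * Cᴴ) := by noncomm_ring
    rwa [e] at h2
  have hId : hX.1.cfc (fun x => x) = C * Cᴴ := cfc_id hX.1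
  have hXXc : C * Cᴴ - (C * Cᴴ) * (C * Cᴴ) = hX.1.cfc (fun x => x - x * x) := by
    rw [← cfc_sub, ← cfc_mul, hId]
  rw [hXXc] at hXX
  have hev := cfc_posSemidef_rev hX.1 hXX
  have e1 : (1 : Matrix (Fin d) (Fin d) ℂ) - C * Cᴴ = hX.1.cfc (fun x => 1 - x) := by
    rw [← cfc_sub, cfc_one, hId]
  rw [e1]
  apply cfc_posSemidef
  intro i
  have h0 := hX.eigenvalues_nonneg i
  have h1 := hev i
  have h1' : 0 ≤ hX.1.eigenvalues i - hX.1.eigenvalues i * hX.1.eigenvalues i := h1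
  show 0 ≤ 1 - hX.1.eigenvalues i
  nlinarith

lemma re_trace_mul_conj_le (X Y : Matrix (Fin d) (Fin d) ℂ) :
    (Xᴴ * Y).trace.re ≤ Real.sqrt ((Xᴴ * X).trace.re) * Real.sqrt ((Yᴴ * Y).trace.re) := by
  classical
  let x : EuclideanSpace ℂ (Fin d × Fin d) := WithLp.toLp 2 (fun p : Fin d × Fin d => X p.2 p.1)
  let y : EuclideanSpace ℂ (Fin d × Fin d) := WithLp.toLp 2 (fun p : Fin d × Fin d => Y p.2 p.1)
  have hinner : (Xᴴ * Y).trace = inner (𝕜 := ℂ) x y := by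
    rw [PiLp.inner_apply]
    rw [Matrix.trace, Fintype.sum_prod_type]
    refine Finset.sum_congr rfl fun j _ => ?_
    rw [Matrix.diag_apply, Matrix.mul_apply]
    refine Finset.sum_congr rfl fun i _ => ?_
    simp [x, y, Matrix.conjTranspose_apply, RCLike.inner_apply]
    ring
  have hx : Real.sqrt ((Xᴴ * X).trace.re) = ‖x‖ := by
    rw [trace_re_AhA_eq, EuclideanSpace.norm_eq]
    congr 1
    rw [Fintype.sum_prod_type]
    refine Finset.sum_congr rfl fun j _ => Finset.sum_congr rfl fun i _ => ?_
    simp [x, Complex.sq_norm]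
  have hy : Real.sqrt ((Yᴴ * Y).trace.re) = ‖y‖ := by
    rw [trace_re_AhA_eq, EuclideanSpace.norm_eq]
    congr 1
    rw [Fintype.sum_prod_type]
    refine Finset.sum_congr rfl fun j _ => Finset.sum_congr rfl fun i _ => ?_
    simp [y, Complex.sq_norm]
  rw [hinner, hx, hy]
  calc (inner (𝕜 := ℂ) x y).re ≤ ‖inner (𝕜 := ℂ) x y‖ := Complex.re_le_norm _
    _ ≤ ‖x‖ * ‖y‖ := norm_inner_le_norm x y


lemma re_trace_star (Z : Matrix (Fin d) (Fin d) ℂ) : (Zᴴ).trace.re = Z.trace.re := by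
  rw [trace_conjTranspose]
  simp [Complex.star_def]

lemma re_trace_le_traceNorm (M C : Matrix (Fin d) (Fin d) ℂ)
    (hC : (1 - C * Cᴴ).PosSemidef) : (C * M).trace.re ≤ traceNorm M := by
  have hMM := posSemidef_conjTranspose_mul_self M
  set hH := hMM.1 with hHdef
  have hev : ∀ i, 0 ≤ hH.eigenvalues i := hMM.eigenvalues_nonneg
  set r4 : ℝ → ℝ := fun x => Real.sqrt (Real.sqrt x) with hr4
  set r4i : ℝ → ℝ := fun x => if x ≤ 0 then 0 else (Real.sqrt (Real.sqrt x))⁻¹ with hr4i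
  set s : ℝ → ℝ := fun x => if x ≤ 0 then 0 else 1 with hs
  have hQH : (hH.cfc r4)ᴴ = hH.cfc r4 := cfc_herm hH r4
  have hKH : (hH.cfc r4i)ᴴ = hH.cfc r4i := cfc_herm hH r4i
  -- eigenvalue identities
  have i1 : ∀ i, r4i (hH.eigenvalues i) * r4 (hH.eigenvalues i) = s (hH.eigenvalues i) := by
    intro i
    by_cases h : hH.eigenvalues i ≤ 0
    · simp [hr4i, hs, h]
    · have hpos : 0 < Real.sqrt (Real.sqrt (hH.eigenvalues i)) :=
        Real.sqrt_pos.mpr (Real.sqrt_pos.mpr (lt_of_not_ge h))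
      simp [hr4i, hr4, hs, h, inv_mul_cancel₀ (ne_of_gt hpos)]
  have i2 : ∀ i, r4 (hH.eigenvalues i) * r4 (hH.eigenvalues i) = Real.sqrt (hH.eigenvalues i) :=
    fun i => Real.mul_self_sqrt (Real.sqrt_nonneg _)
  have i3 : ∀ i, r4i (hH.eigenvalues i) * r4i (hH.eigenvalues i) * (hH.eigenvalues i)
      = Real.sqrt (hH.eigenvalues i) := by
    intro i
    by_cases h : hH.eigenvalues i ≤ 0
    · have h0 : hH.eigenvalues i = 0 := le_antisymm h (hev i)
      simp [hr4i, h, h0]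
    · have hs4 : Real.sqrt (Real.sqrt (hH.eigenvalues i)) * Real.sqrt (Real.sqrt (hH.eigenvalues i))
          = Real.sqrt (hH.eigenvalues i) := Real.mul_self_sqrt (Real.sqrt_nonneg _)
      simp only [hr4i, if_neg h]
      rw [← mul_inv, hs4, inv_mul_eq_div]
      exact Real.div_sqrt
  -- trace norm as cfc trace
  have htnM : traceNorm M = (hH.cfc Real.sqrt).trace.re := by
    rw [traceNorm, psqrt_eq_cfc hMM]
  -- M * support = M
  have hMs : M * hH.cfc s = M := by
    have e1 : (M - M * hH.cfc s)ᴴ * (M - M * hH.cfc s) = 0 := by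
      have e2 : M - M * hH.cfc s = M * hH.cfc (fun x => 1 - s x) := by
        rw [← cfc_sub hH (fun _ => 1) s, cfc_one, mul_sub, mul_one]
      rw [e2, conjTranspose_mul, cfc_herm]
      calc hH.cfc (fun x => 1 - s x) * Mᴴ * (M * hH.cfc (fun x => 1 - s x))
          = hH.cfc (fun x => 1 - s x) * (Mᴴ * M) * hH.cfc (fun x => 1 - s x) := by
            simp only [Matrix.mul_assoc]
        _ = hH.cfc (fun x => (1 - s x) * x * (1 - s x)) := cfc_conj hH _ _
        _ = hH.cfc (fun _ => 0) := by
            apply cfc_congr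
            intro i
            by_cases h : hH.eigenvalues i ≤ 0
            · have h0 : hH.eigenvalues i = 0 := le_antisymm h (hev i)
              simp [hs, h0]
            · simp [hs, h]
        _ = 0 := cfc_zero hH
    have := conjTranspose_mul_self_eq_zero.mp e1
    exact (sub_eq_zero.mp this).symm
  -- cross term
  have hKQ : hH.cfc r4i * hH.cfc r4 = hH.cfc s := by
    rw [cfc_mul]
    exact cfc_congr hH i1
  have hcross : ((M * hH.cfc r4i) * (Cᴴ * hH.cfc r4)ᴴ).trace.re = (C * M).trace.re := by
    have e : (M * hH.cfc r4i) * (Cᴴ * hH.cfc r4)ᴴ = M * C := by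
      rw [conjTranspose_mul, hQH, conjTranspose_conjTranspose]
      calc M * hH.cfc r4i * (hH.cfc r4 * C)
          = M * (hH.cfc r4i * hH.cfc r4) * C := by simp only [Matrix.mul_assoc]
        _ = M * C := by rw [hKQ, hMs]
    rw [e, trace_mul_comm]
  -- A Aᴴ term
  have hAA : ((M * hH.cfc r4i) * (M * hH.cfc r4i)ᴴ).trace.re = traceNorm M := by
    have e : (M * hH.cfc r4i) * (M * hH.cfc r4i)ᴴ
        = M * ((hH.cfc r4i * hH.cfc r4i) * Mᴴ) := by
      rw [conjTranspose_mul, hKH]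
      simp only [Matrix.mul_assoc]
    rw [e, trace_mul_comm]
    have e2 : (hH.cfc r4i * hH.cfc r4i) * Mᴴ * M = hH.cfc Real.sqrt := by
      rw [Matrix.mul_assoc, cfc_mul]
      have h3 := cfc_mul_A hH (fun x => r4i x * r4i x)
      rw [hHdef] at h3 ⊢
      rw [h3]
      exact cfc_congr _ i3
    rw [show ((hH.cfc r4i * hH.cfc r4i) * Mᴴ) * M
        = (hH.cfc r4i * hH.cfc r4i) * Mᴴ * M from rfl, e2, htnM]
  -- B Bᴴ term
  have hBB : ((Cᴴ * hH.cfc r4) * (Cᴴ * hH.cfc r4)ᴴ).trace.re ≤ traceNorm M := by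
    have e : ((Cᴴ * hH.cfc r4) * (Cᴴ * hH.cfc r4)ᴴ).trace
        = (hH.cfc r4 * (C * Cᴴ) * (hH.cfc r4)ᴴ).trace := by
      rw [trace_mul_comm, conjTranspose_mul, conjTranspose_conjTranspose, hQH]
      simp only [Matrix.mul_assoc]
    rw [e]
    refine le_trans (trace_congr_mono hC (hH.cfc r4)) ?_
    have e2 : hH.cfc r4 * (hH.cfc r4)ᴴ = hH.cfc Real.sqrt := by
      rw [hQH, cfc_mul]
      exact cfc_congr hH i2
    rw [e2, htnM]
  -- expansion
  have hpsd : 0 ≤ (((M * hH.cfc r4i) - (Cᴴ * hH.cfc r4))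
      * ((M * hH.cfc r4i) - (Cᴴ * hH.cfc r4))ᴴ).trace.re :=
    trace_re_nonneg_of_psd (posSemidef_self_mul_conjTranspose _)
  have hexp : (((M * hH.cfc r4i) - (Cᴴ * hH.cfc r4))
      * ((M * hH.cfc r4i) - (Cᴴ * hH.cfc r4))ᴴ).trace.re
      = ((M * hH.cfc r4i) * (M * hH.cfc r4i)ᴴ).trace.re
        + ((Cᴴ * hH.cfc r4) * (Cᴴ * hH.cfc r4)ᴴ).trace.re
        - 2 * ((M * hH.cfc r4i) * (Cᴴ * hH.cfc r4)ᴴ).trace.re := by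
    have e : ((M * hH.cfc r4i) - (Cᴴ * hH.cfc r4)) * ((M * hH.cfc r4i) - (Cᴴ * hH.cfc r4))ᴴ
        = ((M * hH.cfc r4i) * (M * hH.cfc r4i)ᴴ + (Cᴴ * hH.cfc r4) * (Cᴴ * hH.cfc r4)ᴴ)
          - ((M * hH.cfc r4i) * (Cᴴ * hH.cfc r4)ᴴ + (Cᴴ * hH.cfc r4) * (M * hH.cfc r4i)ᴴ) := by
      rw [conjTranspose_sub]
      noncomm_ring
    have eBA : ((Cᴴ * hH.cfc r4) * (M * hH.cfc r4i)ᴴ).trace.re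
        = ((M * hH.cfc r4i) * (Cᴴ * hH.cfc r4)ᴴ).trace.re := by
      rw [show (Cᴴ * hH.cfc r4) * (M * hH.cfc r4i)ᴴ
          = ((M * hH.cfc r4i) * (Cᴴ * hH.cfc r4)ᴴ)ᴴ from by
        simp [conjTranspose_mul, Matrix.mul_assoc]]
      exact re_trace_star _
    rw [e, trace_sub, trace_add, trace_add, Complex.sub_re, Complex.add_re, Complex.add_re, eBA]
    ring
  rw [hexp, hcross] at hpsd
  linarith [hBB, hAA.ge, hAA.le]

set_option maxHeartbeats 1000000 in
lemma traceNorm_attained (M : Matrix (Fin d) (Fin d) ℂ) :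
    ∃ C : Matrix (Fin d) (Fin d) ℂ, (1 - C * Cᴴ).PosSemidef ∧ (1 - Cᴴ * C).PosSemidef ∧
      (C * M).trace.re = traceNorm M := by
  have hMM := posSemidef_conjTranspose_mul_self M
  have hev : ∀ i, 0 ≤ hMM.1.eigenvalues i := hMM.eigenvalues_nonneg
  set pinv : ℝ → ℝ := fun x => if x ≤ 0 then 0 else (Real.sqrt x)⁻¹ with hpinv
  set s : ℝ → ℝ := fun x => if x ≤ 0 then 0 else 1 with hs
  have hpinvH : (hMM.1.cfc pinv)ᴴ = hMM.1.cfc pinv := cfc_herm hMM.1 pinv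
  have hCC : (hMM.1.cfc pinv * Mᴴ) * (hMM.1.cfc pinv * Mᴴ)ᴴ = hMM.1.cfc s := by
    rw [conjTranspose_mul, conjTranspose_conjTranspose, hpinvH]
    calc hMM.1.cfc pinv * Mᴴ * (M * hMM.1.cfc pinv)
        = hMM.1.cfc pinv * (Mᴴ * M) * hMM.1.cfc pinv := by simp only [Matrix.mul_assoc]
      _ = hMM.1.cfc (fun x => pinv x * x * pinv x) := cfc_conj hMM.1 _ _
      _ = hMM.1.cfc s := by
          apply cfc_congr
          intro i
          by_cases h : hMM.1.eigenvalues i ≤ 0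
          · simp [hpinv, hs, h]
          · have hlt := lt_of_not_ge h
            have hsp : 0 < Real.sqrt (hMM.1.eigenvalues i) := Real.sqrt_pos.mpr hlt
            simp only [hpinv, hs, if_neg h]
            rw [inv_mul_eq_div, Real.div_sqrt, mul_inv_cancel₀ (ne_of_gt hsp)]
  have hone : (1 - (hMM.1.cfc pinv * Mᴴ) * (hMM.1.cfc pinv * Mᴴ)ᴴ).PosSemidef := by
    rw [hCC, show (1 : Matrix (Fin d) (Fin d) ℂ) - hMM.1.cfc s = hMM.1.cfc (fun x => 1 - s x) from by
      rw [← cfc_sub hMM.1 (fun _ => 1) s, cfc_one]]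
    apply cfc_posSemidef
    intro i
    by_cases h : hMM.1.eigenvalues i ≤ 0 <;> simp [hs, h]
  refine ⟨hMM.1.cfc pinv * Mᴴ, hone, ?_, ?_⟩
  · have h' := contraction_flip (C := (hMM.1.cfc pinv * Mᴴ)ᴴ)
      (by rwa [conjTranspose_conjTranspose])
    rwa [conjTranspose_conjTranspose] at h' 
  · have e : (hMM.1.cfc pinv * Mᴴ) * M = hMM.1.cfc Real.sqrt := by
      rw [Matrix.mul_assoc]
      have h := A_mul_cfc hMM.1 pinv
      calc hMM.1.cfc pinv * (Mᴴ * M) = hMM.1.cfc pinv * hMM.1.cfc (fun x => x) := by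
            rw [cfc_id]
        _ = hMM.1.cfc (fun x => pinv x * x) := cfc_mul hMM.1 _ _
        _ = hMM.1.cfc Real.sqrt := by
            apply cfc_congr
            intro i
            by_cases h : hMM.1.eigenvalues i ≤ 0
            · have h0 : hMM.1.eigenvalues i = 0 := le_antisymm h (hev i)
              simp [hpinv, h, h0]
            · simp only [hpinv, if_neg h]
              rw [inv_mul_eq_div, Real.div_sqrt]
    rw [e, traceNorm, psqrt_eq_cfc hMM]

lemma traceNorm_add_le (M N : Matrix (Fin d) (Fin d) ℂ) :
    traceNorm (M + N) ≤ traceNorm M + traceNorm N := by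
  obtain ⟨C, h1, h2, h3⟩ := traceNorm_attained (M + N)
  rw [← h3, mul_add, trace_add, Complex.add_re]
  exact add_le_add (re_trace_le_traceNorm M C h1) (re_trace_le_traceNorm N C h1)

lemma traceNorm_CS (A B : Matrix (Fin d) (Fin d) ℂ) :
    traceNorm (Aᴴ * B) ≤ Real.sqrt ((Aᴴ * A).trace.re) * Real.sqrt ((Bᴴ * B).trace.re) := by
  obtain ⟨C, h1, h2, h3⟩ := traceNorm_attained (Aᴴ * B)
  rw [← h3]
  have e : C * (Aᴴ * B) = (A * Cᴴ)ᴴ * B := by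
    rw [conjTranspose_mul, conjTranspose_conjTranspose, Matrix.mul_assoc]
  rw [e]
  refine le_trans (re_trace_mul_conj_le _ _) ?_
  have key : ((A * Cᴴ)ᴴ * (A * Cᴴ)).trace.re ≤ (Aᴴ * A).trace.re := by
    have e0 : ((A * Cᴴ)ᴴ * (A * Cᴴ)).trace = ((A * Cᴴ) * (A * Cᴴ)ᴴ).trace :=
      trace_mul_comm _ _
    have e2 : (A * Cᴴ) * (A * Cᴴ)ᴴ = A * (Cᴴ * C) * Aᴴ := by
      rw [conjTranspose_mul, conjTranspose_conjTranspose]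
      simp only [Matrix.mul_assoc]
    have e3 : (A * Aᴴ).trace = (Aᴴ * A).trace := trace_mul_comm _ _
    rw [e0, e2]
    refine le_trans (trace_congr_mono h2 A) ?_
    rw [e3]
  exact mul_le_mul_of_nonneg_right (Real.sqrt_le_sqrt key) (Real.sqrt_nonneg _)

lemma traceNorm_psqrt {W : Matrix (Fin d) (Fin d) ℂ} (hW : W.PosSemidef) :
    traceNorm (psqrt W) = (psqrt W).trace.re := by
  rw [traceNorm, psqrt_herm hW, psqrt_mul_self hW]

lemma trace_psqrt_mono {W₁ W₂ : Matrix (Fin d) (Fin d) ℂ} (h1 : W₁.PosSemidef)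
    (h2 : W₂.PosSemidef) (h12 : (W₂ - W₁).PosSemidef) :
    (psqrt W₁).trace.re ≤ (psqrt W₂).trace.re := by
  have hev : ∀ i, 0 ≤ h2.1.eigenvalues i := h2.eigenvalues_nonneg
  set pinv : ℝ → ℝ := fun x => if x ≤ 0 then 0 else (Real.sqrt x)⁻¹ with hpinv
  set s : ℝ → ℝ := fun x => if x ≤ 0 then 0 else 1 with hs
  have hGH : (h2.1.cfc pinv)ᴴ = h2.1.cfc pinv := cfc_herm h2.1 pinv
  have hsub : (1 : Matrix (Fin d) (Fin d) ℂ) - h2.1.cfc s = h2.1.cfc (fun x => 1 - s x) := by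
    rw [← cfc_sub h2.1 (fun _ => 1) s, cfc_one]
  have honems : (h2.1.cfc (fun x => 1 - s x)).PosSemidef := by
    apply cfc_posSemidef
    intro i
    by_cases h : h2.1.eigenvalues i ≤ 0 <;> simp [hs, h]
  have hZH : (h2.1.cfc (fun x => 1 - s x))ᴴ = h2.1.cfc (fun x => 1 - s x) :=
    cfc_herm h2.1 _
  -- C = psqrt W₁ * G is a contraction
  have hCsC : (psqrt W₁ * h2.1.cfc pinv)ᴴ * (psqrt W₁ * h2.1.cfc pinv)
      = h2.1.cfc pinv * W₁ * h2.1.cfc pinv := by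
    rw [conjTranspose_mul, hGH, psqrt_herm h1]
    calc h2.1.cfc pinv * psqrt W₁ * (psqrt W₁ * h2.1.cfc pinv)
        = h2.1.cfc pinv * (psqrt W₁ * psqrt W₁) * h2.1.cfc pinv := by
          simp only [Matrix.mul_assoc]
      _ = h2.1.cfc pinv * W₁ * h2.1.cfc pinv := by rw [psqrt_mul_self h1]
  have hGW2G : h2.1.cfc pinv * W₂ * h2.1.cfc pinv = h2.1.cfc s := by
    rw [cfc_conj h2.1]
    apply cfc_congr
    intro i
    by_cases h : h2.1.eigenvalues i ≤ 0
    · have h0 : h2.1.eigenvalues i = 0 := le_antisymm h (hev i)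
      simp [hpinv, hs, h, h0]
    · have hsp : 0 < Real.sqrt (h2.1.eigenvalues i) := Real.sqrt_pos.mpr (lt_of_not_ge h)
      simp only [hpinv, hs, if_neg h]
      rw [inv_mul_eq_div, Real.div_sqrt, mul_inv_cancel₀ (ne_of_gt hsp)]
  have hcontr : (1 - (psqrt W₁ * h2.1.cfc pinv)ᴴ * (psqrt W₁ * h2.1.cfc pinv)).PosSemidef := by
    rw [hCsC]
    have e : (1 : Matrix (Fin d) (Fin d) ℂ) - h2.1.cfc pinv * W₁ * h2.1.cfc pinv
        = (1 - h2.1.cfc pinv * W₂ * h2.1.cfc pinv)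
          + h2.1.cfc pinv * (W₂ - W₁) * h2.1.cfc pinv := by noncomm_ring
    rw [e, hGW2G, hsub]
    refine honems.add ?_
    have := h12.mul_mul_conjTranspose_same (h2.1.cfc pinv)
    rwa [hGH] at this
  have hC := contraction_flip hcontr
  have key := re_trace_le_traceNorm (psqrt W₂) (psqrt W₁ * h2.1.cfc pinv) hC
  -- G * psqrt W₂ = support
  have hGs : h2.1.cfc pinv * psqrt W₂ = h2.1.cfc s := by
    rw [psqrt_eq_cfc h2, cfc_mul]
    apply cfc_congr
    intro i
    by_cases h : h2.1.eigenvalues i ≤ 0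
    · have h0 : h2.1.eigenvalues i = 0 := le_antisymm h (hev i)
      simp [hpinv, hs, h, h0]
    · have hsp : 0 < Real.sqrt (h2.1.eigenvalues i) := Real.sqrt_pos.mpr (lt_of_not_ge h)
      simp only [hpinv, hs, if_neg h]
      rw [inv_mul_cancel₀ (ne_of_gt hsp)]
  -- psqrt W₁ * support = psqrt W₁
  have hP1s : psqrt W₁ * h2.1.cfc s = psqrt W₁ := by
    have hZW2Z : h2.1.cfc (fun x => 1 - s x) * W₂ * h2.1.cfc (fun x => 1 - s x) = 0 := by
      rw [cfc_conj h2.1]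
      calc h2.1.cfc (fun x => (1 - s x) * x * (1 - s x)) = h2.1.cfc (fun _ => 0) := by
            apply cfc_congr
            intro i
            by_cases h : h2.1.eigenvalues i ≤ 0
            · have h0 : h2.1.eigenvalues i = 0 := le_antisymm h (hev i)
              simp [hs, h, h0]
            · simp [hs, h]
        _ = 0 := cfc_zero h2.1
    have hsplit : h2.1.cfc (fun x => 1 - s x) * W₁ * h2.1.cfc (fun x => 1 - s x)
          + h2.1.cfc (fun x => 1 - s x) * (W₂ - W₁) * h2.1.cfc (fun x => 1 - s x)
        = h2.1.cfc (fun x => 1 - s x) * W₂ * h2.1.cfc (fun x => 1 - s x) := by noncomm_ring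
    have hpsd1 : (h2.1.cfc (fun x => 1 - s x) * W₁ * h2.1.cfc (fun x => 1 - s x)).PosSemidef := by
      have := h1.mul_mul_conjTranspose_same (h2.1.cfc (fun x => 1 - s x))
      rwa [hZH] at this
    have hpsd2 : (h2.1.cfc (fun x => 1 - s x) * (W₂ - W₁) * h2.1.cfc (fun x => 1 - s x)).PosSemidef := by
      have := h12.mul_mul_conjTranspose_same (h2.1.cfc (fun x => 1 - s x))
      rwa [hZH] at this
    have htr0 : (h2.1.cfc (fun x => 1 - s x) * W₁ * h2.1.cfc (fun x => 1 - s x)).trace.re = 0 := by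
      have := congrArg (fun X : Matrix (Fin d) (Fin d) ℂ => X.trace.re) hsplit
      simp only [hZW2Z, trace_add, Complex.add_re, trace_zero, Complex.zero_re] at this
      have a1 := trace_re_nonneg_of_psd hpsd1
      have a2 := trace_re_nonneg_of_psd hpsd2
      linarith
    have hRz : psqrt W₁ * h2.1.cfc (fun x => 1 - s x) = 0 := by
      apply eq_zero_of_trace_AhA
      have e : (psqrt W₁ * h2.1.cfc (fun x => 1 - s x))ᴴ * (psqrt W₁ * h2.1.cfc (fun x => 1 - s x))
          = h2.1.cfc (fun x => 1 - s x) * W₁ * h2.1.cfc (fun x => 1 - s x) := by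
        rw [conjTranspose_mul, hZH, psqrt_herm h1]
        calc h2.1.cfc (fun x => 1 - s x) * psqrt W₁ * (psqrt W₁ * h2.1.cfc (fun x => 1 - s x))
            = h2.1.cfc (fun x => 1 - s x) * (psqrt W₁ * psqrt W₁) * h2.1.cfc (fun x => 1 - s x) := by
              simp only [Matrix.mul_assoc]
          _ = _ := by rw [psqrt_mul_self h1]
      rw [e, htr0]
    have e2 : psqrt W₁ * h2.1.cfc (fun x => 1 - s x) = psqrt W₁ - psqrt W₁ * h2.1.cfc s := by
      rw [← hsub, mul_sub, mul_one]
    rw [e2] at hRz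
    exact (sub_eq_zero.mp hRz).symm
  have hCP : psqrt W₁ * h2.1.cfc pinv * psqrt W₂ = psqrt W₁ := by
    rw [Matrix.mul_assoc, hGs, hP1s]
  rw [hCP, traceNorm_psqrt h2] at key
  exact key

lemma psd_conj_psqrt {X σ : Matrix (Fin d) (Fin d) ℂ} (hX : X.PosSemidef) (hσ : σ.PosSemidef) :
    (psqrt σ * X * psqrt σ).PosSemidef := by
  have := hX.mul_mul_conjTranspose_same (psqrt σ)
  rwa [psqrt_herm hσ] at this

lemma fid_mono {X Y σ : Matrix (Fin d) (Fin d) ℂ} (hσ : σ.PosSemidef) (hX : X.PosSemidef)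
    (hY : Y.PosSemidef) (hXY : (Y - X).PosSemidef) : fid X σ ≤ fid Y σ := by
  unfold fid
  apply trace_psqrt_mono (psd_conj_psqrt hX hσ) (psd_conj_psqrt hY hσ)
  have e : psqrt σ * Y * psqrt σ - psqrt σ * X * psqrt σ = psqrt σ * (Y - X) * psqrt σ := by
    noncomm_ring
  rw [e]
  exact psd_conj_psqrt hXY hσ

lemma fid_eq_traceNorm {X σ : Matrix (Fin d) (Fin d) ℂ} (hX : X.PosSemidef) (hσ : σ.PosSemidef) :
    fid X σ = traceNorm (psqrt X * psqrt σ) := by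
  rw [fid, traceNorm]
  have e : psqrt σ * X * psqrt σ = (psqrt X * psqrt σ)ᴴ * (psqrt X * psqrt σ) := by
    rw [conjTranspose_mul, psqrt_herm hX, psqrt_herm hσ]
    calc psqrt σ * X * psqrt σ = psqrt σ * (psqrt X * psqrt X) * psqrt σ := by
          rw [psqrt_mul_self hX]
      _ = psqrt σ * psqrt X * (psqrt X * psqrt σ) := by simp only [Matrix.mul_assoc]
  rw [e]

lemma psqrt_cfc {A : Matrix (Fin d) (Fin d) ℂ} (hA : A.IsHermitian) {g h : ℝ → ℝ}
    (hg : ∀ i, 0 ≤ h (hA.eigenvalues i))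
    (hh : ∀ i, h (hA.eigenvalues i) * h (hA.eigenvalues i) = g (hA.eigenvalues i)) :
    psqrt (hA.cfc g) = hA.cfc h := by
  have hgps : (hA.cfc g).PosSemidef := by
    apply cfc_posSemidef
    intro i
    rw [← hh i]
    exact mul_nonneg (hg i) (hg i)
  rw [psqrt_of_posSemidef hgps]
  refine psd_sqrt_unique (cfc_posSemidef hA hg) hgps ?_
  rw [sq, cfc_mul]
  exact cfc_congr hA hh

end psqrtsec
end Aux


theorem soft_truncation_error {d : ℕ} (ρ σ : Matrix (Fin d) (Fin d) ℂ)
    (hρ : ρ.PosSemidef) (hσ : σ.PosSemidef)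
    (hρ1 : ρ.trace = 1) (hσ1 : σ.trace = 1)
    (α β : ℝ) (hα : 0 ≤ α) (hαβ : α ≤ β) (hβ : β ∈ Set.Ioc (0 : ℝ) 1)
    (f : ℝ → ℝ) (hf01 : ∀ x, f x ∈ Set.Icc (0 : ℝ) 1)
    (hf0 : ∀ x, x < α → f x = 0) (hf1 : ∀ x, β ≤ x → f x = 1) :
    fid ρ σ - fid (hρ.1.cfc f * ρ) σ
      ≤ Real.sqrt ((hρ.1.cfc ((Set.Ico 0 β).indicator 1) * ρ
            * hρ.1.cfc ((Set.Ico 0 β).indicator 1)).trace.re)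
        * Real.sqrt ((hρ.1.cfc ((Set.Ico 0 β).indicator 1) * σ
            * hρ.1.cfc ((Set.Ico 0 β).indicator 1)).trace.re) := by
  have hev : ∀ i, 0 ≤ hρ.1.eigenvalues i := hρ.eigenvalues_nonneg
  set p : ℝ → ℝ := (Set.Ico 0 β).indicator 1 with hpdef
  have hpval : ∀ x, p x = if x ∈ Set.Ico 0 β then 1 else 0 := by
    intro x
    simp [hpdef, Set.indicator_apply]
  -- step A : fidelity as a trace norm
  have hA0 : fid ρ σ = traceNorm (psqrt ρ * psqrt σ) := Aux.fid_eq_traceNorm hρ hσ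
  -- split of the square root of ρ
  have hsplit : psqrt ρ = hρ.1.cfc (fun x => p x * Real.sqrt x)
      + hρ.1.cfc (fun x => (1 - p x) * Real.sqrt x) := by
    rw [Aux.psqrt_eq_cfc hρ, Aux.cfc_add]
    apply Aux.cfc_congr
    intro i
    ring
  have tri : traceNorm (psqrt ρ * psqrt σ)
      ≤ traceNorm (hρ.1.cfc (fun x => p x * Real.sqrt x) * psqrt σ)
        + traceNorm (hρ.1.cfc (fun x => (1 - p x) * Real.sqrt x) * psqrt σ) := by
    rw [hsplit, add_mul]
    exact Aux.traceNorm_add_le _ _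
  -- Term 1 : Cauchy-Schwarz
  have hterm1 : traceNorm (hρ.1.cfc (fun x => p x * Real.sqrt x) * psqrt σ)
      ≤ Real.sqrt ((hρ.1.cfc p * ρ * hρ.1.cfc p).trace.re)
        * Real.sqrt ((hρ.1.cfc p * σ * hρ.1.cfc p).trace.re) := by
    have e1 : (hρ.1.cfc (fun x => p x * Real.sqrt x))ᴴ * (hρ.1.cfc p * psqrt σ)
        = hρ.1.cfc (fun x => p x * Real.sqrt x) * psqrt σ := by
      rw [Aux.cfc_herm, ← Matrix.mul_assoc, Aux.cfc_mul]
      congr 1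
      apply Aux.cfc_congr
      intro i
      by_cases h : hρ.1.eigenvalues i ∈ Set.Ico 0 β <;> simp [hpval, h]
    have eAA : (hρ.1.cfc (fun x => p x * Real.sqrt x))ᴴ * hρ.1.cfc (fun x => p x * Real.sqrt x)
        = hρ.1.cfc p * ρ * hρ.1.cfc p := by
      rw [Aux.cfc_herm, Aux.cfc_mul, Aux.cfc_conj]
      apply Aux.cfc_congr
      intro i
      by_cases h : hρ.1.eigenvalues i ∈ Set.Ico 0 β
      · simp [hpval, h, Real.mul_self_sqrt (hev i)]
      · simp [hpval, h]
    have eBB : ((hρ.1.cfc p * psqrt σ)ᴴ * (hρ.1.cfc p * psqrt σ)).trace.re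
        = (hρ.1.cfc p * σ * hρ.1.cfc p).trace.re := by
      rw [trace_mul_comm]
      have e : (hρ.1.cfc p * psqrt σ) * (hρ.1.cfc p * psqrt σ)ᴴ
          = hρ.1.cfc p * σ * hρ.1.cfc p := by
        rw [conjTranspose_mul, Aux.psqrt_herm hσ, Aux.cfc_herm]
        calc hρ.1.cfc p * psqrt σ * (psqrt σ * hρ.1.cfc p)
            = hρ.1.cfc p * (psqrt σ * psqrt σ) * hρ.1.cfc p := by
              simp only [Matrix.mul_assoc]
          _ = hρ.1.cfc p * σ * hρ.1.cfc p := by rw [Aux.psqrt_mul_self hσ]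
      rw [e]
    calc traceNorm (hρ.1.cfc (fun x => p x * Real.sqrt x) * psqrt σ)
        = traceNorm ((hρ.1.cfc (fun x => p x * Real.sqrt x))ᴴ * (hρ.1.cfc p * psqrt σ)) := by
          rw [e1]
      _ ≤ Real.sqrt (((hρ.1.cfc (fun x => p x * Real.sqrt x))ᴴ
            * hρ.1.cfc (fun x => p x * Real.sqrt x)).trace.re)
          * Real.sqrt (((hρ.1.cfc p * psqrt σ)ᴴ * (hρ.1.cfc p * psqrt σ)).trace.re) :=
          Aux.traceNorm_CS _ _
      _ = _ := by rw [eAA, eBB]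
  -- Term 2 : monotonicity
  have hterm2 : traceNorm (hρ.1.cfc (fun x => (1 - p x) * Real.sqrt x) * psqrt σ)
      ≤ fid (hρ.1.cfc f * ρ) σ := by
    have hXps : (hρ.1.cfc (fun x => (1 - p x) * x)).PosSemidef := by
      apply Aux.cfc_posSemidef
      intro i
      by_cases h : hρ.1.eigenvalues i ∈ Set.Ico 0 β
      · simp [hpval, h]
      · simp [hpval, h]
        exact hev i
    have ePsq : psqrt (hρ.1.cfc (fun x => (1 - p x) * x))
        = hρ.1.cfc (fun x => (1 - p x) * Real.sqrt x) := by
      apply Aux.psqrt_cfc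
      · intro i
        by_cases h : hρ.1.eigenvalues i ∈ Set.Ico 0 β
        · simp [hpval, h]
        · simp [hpval, h, Real.sqrt_nonneg]
      · intro i
        by_cases h : hρ.1.eigenvalues i ∈ Set.Ico 0 β
        · simp [hpval, h]
        · simp [hpval, h, Real.mul_self_sqrt (hev i)]
    have eY : hρ.1.cfc f * ρ = hρ.1.cfc (fun x => f x * x) := Aux.cfc_mul_A hρ.1 f
    have hYps : (hρ.1.cfc f * ρ).PosSemidef := by
      rw [eY]
      apply Aux.cfc_posSemidef
      intro i
      exact mul_nonneg (hf01 _).1 (hev i)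
    have hYX : (hρ.1.cfc f * ρ - hρ.1.cfc (fun x => (1 - p x) * x)).PosSemidef := by
      rw [eY, Aux.cfc_sub]
      apply Aux.cfc_posSemidef
      intro i
      by_cases h : hρ.1.eigenvalues i ∈ Set.Ico 0 β
      · simp only [hpval, if_pos h]
        have : (0:ℝ) ≤ f (hρ.1.eigenvalues i) * hρ.1.eigenvalues i :=
          mul_nonneg (hf01 _).1 (hev i)
        linarith [this]
      · have hge : β ≤ hρ.1.eigenvalues i := by
          by_contra hlt
          exact h (Set.mem_Ico.mpr ⟨hev i, lt_of_not_ge hlt⟩)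
        simp [hpval, hf1 _ hge]
        split_ifs with hc
        · linarith [hev i]
        · simp
    have mono := Aux.fid_mono hσ hXps hYps hYX
    have efid : fid (hρ.1.cfc (fun x => (1 - p x) * x)) σ
        = traceNorm (hρ.1.cfc (fun x => (1 - p x) * Real.sqrt x) * psqrt σ) := by
      rw [Aux.fid_eq_traceNorm hXps hσ, ePsq]
    rw [efid] at mono
    exact mono
  linarith [hA0, tri, hterm1, hterm2]
end

section
/- Let Λ and Λ̂₊ be positive semidefinite d×d matrices each of rank at most r. Then |Tr[sqrt(Λ)] - Tr[sqrt(Λ̂₊)]| ≤ r · ‖sqrt(Λ) - sqrt(Λ̂₊)‖₂ ≤ r · sqrt(‖Λ - Λ̂₊‖₁). -/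
open Matrix ComplexOrder

attribute [local instance] Classical.propDecidable

/-- Frobenius (Schatten 2) norm: `‖M‖₂ = √(Tr (Mᴴ M))`. -/
noncomputable def frobNorm {d : ℕ} (M : Matrix (Fin d) (Fin d) ℂ) : ℝ :=
  Real.sqrt ((Mᴴ * M).trace.re)

variable {d : ℕ}

noncomputable def Matrix.PosSemidef.sqrt {X : Matrix (Fin d) (Fin d) ℂ} (h : X.PosSemidef) :
    Matrix (Fin d) (Fin d) ℂ :=
  h.1.eigenvectorUnitary.1 * diagonal ((↑) ∘ (√·) ∘ h.1.eigenvalues) *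
    (star h.1.eigenvectorUnitary : Matrix (Fin d) (Fin d) ℂ)

open scoped MatrixOrder in
lemma Matrix.PosSemidef.sqrt_eq_cfc {X : Matrix (Fin d) (Fin d) ℂ} (h : X.PosSemidef) :
    h.sqrt = CFC.sqrt X := by
  rw [CFC.sqrt_eq_cfc, cfc_nnreal_eq_real _ X h.nonneg, h.1.cfc_eq]
  simp only [IsHermitian.cfc, Matrix.PosSemidef.sqrt, Real.coe_sqrt, Real.coe_toNNReal']
  rw [Unitary.conjStarAlgAut_apply]
  congr 3
  funext i
  simp [max_eq_left (h.eigenvalues_nonneg i)]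

open scoped MatrixOrder in
lemma Matrix.PosSemidef.posSemidef_sqrt {X : Matrix (Fin d) (Fin d) ℂ} (h : X.PosSemidef) :
    h.sqrt.PosSemidef := by
  rw [h.sqrt_eq_cfc]; exact (CFC.sqrt_nonneg X).posSemidef

open scoped MatrixOrder in
lemma Matrix.PosSemidef.sqrt_mul_self {X : Matrix (Fin d) (Fin d) ℂ} (h : X.PosSemidef) :
    h.sqrt * h.sqrt = X := by
  rw [h.sqrt_eq_cfc]; exact CFC.sqrt_mul_sqrt_self X h.nonneg

open scoped MatrixOrder in
lemma Matrix.PosSemidef.eq_sqrt_of_sq_eq {A B : Matrix (Fin d) (Fin d) ℂ} (hA : A.PosSemidef)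
    (hB : B.PosSemidef) (hAB : A ^ 2 = B) : A = hB.sqrt := by
  rw [hB.sqrt_eq_cfc, eq_comm]
  exact CFC.sqrt_unique (by rw [← sq, hAB]) hA.nonneg

lemma conj_diag_mul (U : Matrix (Fin d) (Fin d) ℂ) (hU : star U * U = 1)
    (f g : Fin d → ℂ) :
    (U * diagonal f * star U) * (U * diagonal g * star U)
      = U * diagonal (fun i => f i * g i) * star U := by
  have h1 : (U * diagonal f * star U) * (U * diagonal g * star U)
      = U * (diagonal f * (star U * U) * diagonal g) * star U := by
    simp only [mul_assoc]
  rw [h1, hU, mul_one, diagonal_mul_diagonal]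

lemma trace_conj_diag (U : Matrix (Fin d) (Fin d) ℂ) (hU : star U * U = 1)
    (f : Fin d → ℂ) :
    (U * diagonal f * star U).trace = ∑ i, f i := by
  rw [trace_mul_cycle, hU, one_mul, trace_diagonal]

lemma psd_diag_re_nonneg {M : Matrix (Fin d) (Fin d) ℂ} (hM : M.PosSemidef)
    (i : Fin d) : 0 ≤ (M i i).re := by
  have := hM.re_dotProduct_nonneg (Pi.single i 1)
  simpa [dotProduct, mulVec, Pi.single_apply, apply_ite, Finset.sum_ite_eq,
    Finset.sum_ite_eq'] using this

lemma psd_trace_re_nonneg {M : Matrix (Fin d) (Fin d) ℂ} (hM : M.PosSemidef) :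
    0 ≤ M.trace.re := by
  rw [Matrix.trace, Complex.re_sum]
  exact Finset.sum_nonneg fun i _ => psd_diag_re_nonneg hM i

lemma trace_conjTranspose_mul_self_re (X : Matrix (Fin d) (Fin d) ℂ) :
    (Xᴴ * X).trace.re = ∑ j, ∑ i, ‖X i j‖ ^ 2 := by
  rw [Matrix.trace, Complex.re_sum]
  congr 1 with j
  rw [Matrix.diag_apply, Matrix.mul_apply, Complex.re_sum]
  congr 1 with i
  rw [Matrix.conjTranspose_apply, Complex.sq_norm]
  simp [Complex.star_def, Complex.mul_re, Complex.normSq_apply]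

lemma trace_re_cauchy (P M : Matrix (Fin d) (Fin d) ℂ) :
    ((Pᴴ * M).trace).re ≤ Real.sqrt ((Pᴴ * P).trace.re) * Real.sqrt ((Mᴴ * M).trace.re) := by
  have key : ((Pᴴ * M).trace).re ≤ ∑ j, ∑ i, ‖P i j‖ * ‖M i j‖ := by
    rw [Matrix.trace, Complex.re_sum]
    refine Finset.sum_le_sum fun j _ => ?_
    rw [Matrix.diag_apply, Matrix.mul_apply, Complex.re_sum]
    refine Finset.sum_le_sum fun i _ => ?_
    calc (Pᴴ j i * M i j).re ≤ ‖Pᴴ j i * M i j‖ := Complex.re_le_norm _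
      _ = ‖P i j‖ * ‖M i j‖ := by
        rw [norm_mul, Matrix.conjTranspose_apply, Complex.star_def, Complex.norm_conj]
  refine key.trans ?_
  rw [trace_conjTranspose_mul_self_re, trace_conjTranspose_mul_self_re,
    ← Real.sqrt_mul (by positivity)]
  have h2 : (∑ j, ∑ i, ‖P i j‖ * ‖M i j‖) ^ 2
      ≤ (∑ j, ∑ i, ‖P i j‖ ^ 2) * (∑ j, ∑ i, ‖M i j‖ ^ 2) := by
    have := Finset.sum_mul_sq_le_sq_mul_sq Finset.univ
      (fun p : Fin d × Fin d => ‖P p.2 p.1‖)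
      (fun p : Fin d × Fin d => ‖M p.2 p.1‖)
    simpa [← Finset.sum_product', Finset.univ_product_univ] using this
  calc (∑ j, ∑ i, ‖P i j‖ * ‖M i j‖)
      = Real.sqrt ((∑ j, ∑ i, ‖P i j‖ * ‖M i j‖) ^ 2) := by
        rw [Real.sqrt_sq (by positivity)]
    _ ≤ _ := Real.sqrt_le_sqrt h2

lemma tr_sqrt_sub_le {X Y : Matrix (Fin d) (Fin d) ℂ} (hX : X.PosSemidef) (hY : Y.PosSemidef)
    {r : ℕ} (hr : X.rank ≤ r) :
    hX.sqrt.trace.re - hY.sqrt.trace.re ≤ Real.sqrt r * frobNorm (hX.sqrt - hY.sqrt) := by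
  classical
  set A := hX.sqrt with hAdef
  set B := hY.sqrt with hBdef
  set U : Matrix (Fin d) (Fin d) ℂ := (hX.1.eigenvectorUnitary : Matrix (Fin d) (Fin d) ℂ) with hUdef
  have hU : star U * U = 1 := mem_unitaryGroup_iff'.mp hX.1.eigenvectorUnitary.2
  set f : Fin d → ℂ := fun i => if hX.1.eigenvalues i = 0 then 0 else 1 with hfdef
  set P : Matrix (Fin d) (Fin d) ℂ := U * diagonal f * star U with hPdef
  have hsq : A = U * diagonal ((↑) ∘ Real.sqrt ∘ hX.1.eigenvalues) * star U := rfl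
  have hPA : P * A = A := by
    have hfg : (fun i => f i * ((↑) ∘ Real.sqrt ∘ hX.1.eigenvalues) i)
        = ((↑) ∘ Real.sqrt ∘ hX.1.eigenvalues : Fin d → ℂ) := by
      funext i
      by_cases h : hX.1.eigenvalues i = 0
      · simp [hfdef, h]
      · simp [hfdef, h]
    rw [hsq, hPdef, conj_diag_mul U hU, hfg]
  have hfstar : star f = f := by
    funext i; by_cases h : hX.1.eigenvalues i = 0 <;> simp [hfdef, h]
  have hPH : Pᴴ = P := by
    have hD : (diagonal f)ᴴ = diagonal f := by rw [diagonal_conjTranspose, hfstar]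
    rw [hPdef, conjTranspose_mul, conjTranspose_mul, hD, ← star_eq_conjTranspose U,
      ← star_eq_conjTranspose (star U), star_star, mul_assoc]
  have hPP : P * P = P := by
    have hff : (fun i => f i * f i) = f := by
      funext i
      by_cases h : hX.1.eigenvalues i = 0 <;> simp [hfdef, h]
    rw [hPdef, conj_diag_mul U hU, hff]
  have hTrP : P.trace.re = (X.rank : ℝ) := by
    rw [hPdef, trace_conj_diag U hU, hX.1.rank_eq_card_non_zero_eigs, Complex.re_sum,
      Fintype.card_subtype]
    rw [Finset.card_filter]
    push_cast
    congr 1 with i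
    by_cases h : hX.1.eigenvalues i = 0 <;> simp [hfdef, h]
  -- step: trace of P*B is at most trace of B
  have hPBle : (P * B).trace.re ≤ B.trace.re := by
    have hQQ : (1 - P) * (1 - P) = 1 - P := by
      rw [sub_mul, one_mul, mul_sub, mul_one, hPP, sub_self, sub_zero]
    have hQH : (1 - P)ᴴ = 1 - P := by rw [conjTranspose_sub, conjTranspose_one, hPH]
    have hpsd : ((1 - P) * B * (1 - P)).PosSemidef := by
      have := hY.posSemidef_sqrt.mul_mul_conjTranspose_same (1 - P)
      rwa [hQH] at this
    have htr : ((1 - P) * B * (1 - P)).trace = B.trace - (P * B).trace := by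
      rw [trace_mul_cycle, hQQ, sub_mul, one_mul, trace_sub]
    have := psd_trace_re_nonneg hpsd
    rw [htr, Complex.sub_re] at this
    linarith
  have hPAtr : (P * A).trace = A.trace := by rw [hPA]
  have key : A.trace.re - B.trace.re ≤ ((Pᴴ * (A - B)).trace).re := by
    rw [hPH, mul_sub, trace_sub, Complex.sub_re, hPAtr]
    linarith
  refine key.trans ?_
  have hc := trace_re_cauchy P (A - B)
  have h3 : (Pᴴ * P).trace.re = P.trace.re := by rw [hPH, hPP]
  rw [h3, hTrP] at hc
  refine hc.trans ?_
  simp only [frobNorm]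
  apply mul_le_mul_of_nonneg_right _ (Real.sqrt_nonneg _)
  apply Real.sqrt_le_sqrt
  exact_mod_cast hr

lemma conj_mul' (W : Matrix (Fin d) (Fin d) ℂ) (hW : W * star W = 1)
    (A B : Matrix (Fin d) (Fin d) ℂ) :
    (star W * A * W) * (star W * B * W) = star W * (A * B) * W := by
  have h1 : (star W * A * W) * (star W * B * W)
      = star W * (A * (W * star W) * B) * W := by simp only [mul_assoc]
  rw [h1, hW, mul_one]

lemma powers_stormer {X Y : Matrix (Fin d) (Fin d) ℂ} (hX : X.PosSemidef) (hY : Y.PosSemidef) :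
    frobNorm (hX.sqrt - hY.sqrt) ≤ Real.sqrt (traceNorm (X - Y)) := by
  classical
  set A := hX.sqrt with hAdef
  set B := hY.sqrt with hBdef
  have hApsd : A.PosSemidef := hX.posSemidef_sqrt
  have hBpsd : B.PosSemidef := hY.posSemidef_sqrt
  set C : Matrix (Fin d) (Fin d) ℂ := A - B with hCdef
  have hC : C.IsHermitian := hApsd.1.sub hBpsd.1
  set M : Matrix (Fin d) (Fin d) ℂ := X - Y with hMdef
  have hM : M.IsHermitian := hX.1.sub hY.1
  have hMM : Mᴴ * M = M * M := by rw [hM.eq]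
  have hpsd : (Mᴴ * M).PosSemidef := posSemidef_conjTranspose_mul_self M
  -- eigen data of M
  set V : Matrix (Fin d) (Fin d) ℂ := (hM.eigenvectorUnitary : Matrix (Fin d) (Fin d) ℂ)
    with hVdef
  have hV : star V * V = 1 := mem_unitaryGroup_iff'.mp hM.eigenvectorUnitary.2
  set μ : Fin d → ℝ := hM.eigenvalues with hμdef
  have hMspec : M = V * diagonal (fun j => (μ j : ℂ)) * star V := hM.spectral_theorem
  -- trace norm of M equals sum of |μ j|
  have htn : traceNorm M = ∑ j, |μ j| := by
    set N : Matrix (Fin d) (Fin d) ℂ := V * diagonal (fun j => ((|μ j| : ℝ) : ℂ)) * star V with hNdef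
    have hNpsd : N.PosSemidef := by
      have hdiag : (diagonal (fun j => ((|μ j| : ℝ) : ℂ))).PosSemidef :=
        posSemidef_diagonal_iff.mpr fun j => by
          exact_mod_cast Complex.zero_le_real.mpr (abs_nonneg _)
      have := hdiag.mul_mul_conjTranspose_same V
      rwa [← star_eq_conjTranspose] at this
    have hN2 : N ^ 2 = Mᴴ * M := by
      have habs : (fun j => ((|μ j| : ℝ) : ℂ) * ((|μ j| : ℝ) : ℂ))
          = fun j => (μ j : ℂ) * (μ j : ℂ) := by
        funext j
        rw [← Complex.ofReal_mul, ← Complex.ofReal_mul, abs_mul_abs_self]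
      rw [pow_two, hMM, hNdef, conj_diag_mul V hV, habs]
      conv_rhs => rw [hMspec, conj_diag_mul V hV]
    have hNs : N = hpsd.sqrt := hNpsd.eq_sqrt_of_sq_eq hpsd hN2
    rw [traceNorm, psqrt, dif_pos hpsd]
    change hpsd.sqrt.trace.re = _
    rw [← hNs, hNdef, trace_conj_diag V hV, Complex.re_sum]
    simp
  -- eigen data of C
  set W : Matrix (Fin d) (Fin d) ℂ := (hC.eigenvectorUnitary : Matrix (Fin d) (Fin d) ℂ)
    with hWdef
  have hW : star W * W = 1 := mem_unitaryGroup_iff'.mp hC.eigenvectorUnitary.2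
  have hW' : W * star W = 1 := mem_unitaryGroup_iff.mp hC.eigenvectorUnitary.2
  set c : Fin d → ℝ := hC.eigenvalues with hcdef
  have hCspec : C = W * diagonal (fun i => (c i : ℂ)) * star W := hC.spectral_theorem
  have hCd : star W * C * W = diagonal (fun i => (c i : ℂ)) := by
    rw [hCspec]; simp only [← mul_assoc]; rw [hW, one_mul, mul_assoc, hW, mul_one]
  -- Frobenius norm squared of C is sum of c i ^ 2
  have hfr : (Cᴴ * C).trace.re = ∑ i, c i ^ 2 := by
    rw [hC.eq]
    conv_lhs => rw [hCspec, conj_diag_mul W hW, trace_conj_diag W hW]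
    rw [Complex.re_sum]
    congr 1 with i
    rw [← Complex.ofReal_mul]
    simp [sq]
  -- key pointwise bound: c i ^ 2 is at most |(W* M W) i i|
  have key : ∀ i, c i ^ 2 ≤ ‖(star W * M * W) i i‖ := by
    intro i
    have h2M : M + M = C * (A + B) + (A + B) * C := by
      have hA2 : A * A = X := hX.sqrt_mul_self
      have hB2 : B * B = Y := hY.sqrt_mul_self
      rw [hMdef, hCdef, ← hA2, ← hB2]
      noncomm_ring
    have hGG : (star W * M * W) + (star W * M * W)
        = diagonal (fun i => (c i : ℂ)) * (star W * (A + B) * W)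
          + (star W * (A + B) * W) * diagonal (fun i => (c i : ℂ)) := by
      calc (star W * M * W) + (star W * M * W)
          = star W * (M + M) * W := by rw [mul_add, add_mul]
        _ = star W * (C * (A + B)) * W + star W * ((A + B) * C) * W := by
            rw [h2M, mul_add, add_mul]
        _ = (star W * C * W) * (star W * (A + B) * W)
              + (star W * (A + B) * W) * (star W * C * W) := by
            rw [conj_mul' W hW', conj_mul' W hW']
        _ = _ := by rw [hCd]
    have hentry : (star W * M * W) i i + (star W * M * W) i i
        = (c i : ℂ) * (star W * (A + B) * W) i i + (star W * (A + B) * W) i i * (c i : ℂ) := by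
      have := congrFun (congrFun hGG i) i
      simpa [Matrix.add_apply, Matrix.diagonal_mul, Matrix.mul_diagonal] using this
    have hGii : (star W * M * W) i i = (c i : ℂ) * (star W * (A + B) * W) i i := by
      have h2 : (2 : ℂ) * ((star W * M * W) i i)
          = (2 : ℂ) * ((c i : ℂ) * (star W * (A + B) * W) i i) := by
        rw [two_mul, two_mul, hentry]
        ring
      exact mul_left_cancel₀ two_ne_zero h2
    -- positivity facts
    have hplus : (star W * (A + B + C) * W).PosSemidef := by
      have h2A : A + B + C = A + A := by rw [hCdef]; abel
      rw [h2A]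
      have := (hApsd.add hApsd).conjTranspose_mul_mul_same W
      rwa [← star_eq_conjTranspose] at this
    have hminus : (star W * (A + B - C) * W).PosSemidef := by
      have h2B : A + B - C = B + B := by rw [hCdef]; abel
      rw [h2B]
      have := (hBpsd.add hBpsd).conjTranspose_mul_mul_same W
      rwa [← star_eq_conjTranspose] at this
    have hsplit1 : star W * (A + B + C) * W
        = star W * (A + B) * W + star W * C * W := by rw [mul_add, add_mul]
    have hsplit2 : star W * (A + B - C) * W
        = star W * (A + B) * W - star W * C * W := by rw [mul_sub, sub_mul]
    have hp1 := psd_diag_re_nonneg hplus i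
    have hp2 := psd_diag_re_nonneg hminus i
    rw [hsplit1] at hp1
    rw [hsplit2] at hp2
    rw [Matrix.add_apply, hCd, Complex.add_re, Matrix.diagonal_apply_eq,
      Complex.ofReal_re] at hp1
    rw [Matrix.sub_apply, hCd, Complex.sub_re, Matrix.diagonal_apply_eq,
      Complex.ofReal_re] at hp2
    have habsc : |c i| ≤ ((star W * (A + B) * W) i i).re := abs_le.mpr ⟨by linarith, by linarith⟩
    have hre : ((star W * M * W) i i).re = c i * ((star W * (A + B) * W) i i).re := by
      rw [hGii]
      simp [Complex.mul_re]
    calc c i ^ 2 = |c i| * |c i| := by rw [abs_mul_abs_self, sq]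
      _ ≤ |c i| * ((star W * (A + B) * W) i i).re := by
          apply mul_le_mul_of_nonneg_left habsc (abs_nonneg _)
      _ = |c i * ((star W * (A + B) * W) i i).re| := by
          rw [abs_mul, abs_of_nonneg (le_trans (abs_nonneg _) habsc)]
      _ = |((star W * M * W) i i).re| := by rw [hre]
      _ ≤ ‖(star W * M * W) i i‖ := Complex.abs_re_le_norm _
  -- diagonal entries of W* M W are dominated by the eigenvalues of M
  set Q : Matrix (Fin d) (Fin d) ℂ := star W * V with hQdef
  have hQ : star Q * Q = 1 := by
    rw [hQdef, Matrix.star_mul, star_star]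
    calc star V * W * (star W * V) = star V * (W * star W) * V := by simp only [mul_assoc]
      _ = 1 := by rw [hW', mul_one, hV]
  have hGform : star W * M * W = Q * diagonal (fun j => (μ j : ℂ)) * star Q := by
    rw [hQdef, Matrix.star_mul, star_star, hMspec]
    simp only [mul_assoc]
  have hcol : ∀ j, ∑ i, ‖Q i j‖ ^ 2 = 1 := by
    intro j
    have h1 : (star Q * Q) j j = 1 := by rw [hQ, Matrix.one_apply_eq]
    have h2 : ((star Q * Q) j j).re = ∑ i, ‖Q i j‖ ^ 2 := by
      rw [Matrix.mul_apply, Complex.re_sum]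
      congr 1 with i
      rw [Matrix.star_apply, Complex.sq_norm]
      simp [Complex.star_def, Complex.mul_re, Complex.normSq_apply]
    rw [h1] at h2
    simpa using h2.symm
  have hGentry : ∀ i, ‖(star W * M * W) i i‖
      ≤ ∑ j, |μ j| * ‖Q i j‖ ^ 2 := by
    intro i
    rw [hGform]
    have hform : (Q * diagonal (fun j => (μ j : ℂ)) * star Q) i i
        = ∑ j, Q i j * (μ j : ℂ) * star (Q i j) := by
      rw [Matrix.mul_apply]
      congr 1 with j
      rw [Matrix.mul_diagonal, Matrix.star_apply]
    rw [hform]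
    refine (norm_sum_le _ _).trans ?_
    refine Finset.sum_le_sum fun j _ => ?_
    rw [norm_mul, norm_mul, Complex.star_def, Complex.norm_conj,
      Complex.norm_real, Real.norm_eq_abs]
    rw [sq]
    ring_nf
    exact le_of_eq (by ring)
  -- put everything together
  simp only [frobNorm]
  rw [htn]
  apply Real.sqrt_le_sqrt
  rw [hfr]
  calc ∑ i, c i ^ 2 ≤ ∑ i, ‖(star W * M * W) i i‖ :=
        Finset.sum_le_sum fun i _ => key i
    _ ≤ ∑ i, ∑ j, |μ j| * ‖Q i j‖ ^ 2 :=
        Finset.sum_le_sum fun i _ => hGentry i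
    _ = ∑ j, |μ j| * ∑ i, ‖Q i j‖ ^ 2 := by
        rw [Finset.sum_comm]
        congr 1 with j
        rw [Finset.mul_sum]
    _ = ∑ j, |μ j| := by
        refine Finset.sum_congr rfl fun j _ => ?_
        rw [hcol j, mul_one]

theorem trace_sqrt_diff_bound {d r : ℕ} (Λ L : Matrix (Fin d) (Fin d) ℂ)
    (hΛ : Λ.PosSemidef) (hL : L.PosSemidef)
    (hΛr : Λ.rank ≤ r) (hLr : L.rank ≤ r) :
    |(psqrt Λ).trace.re - (psqrt L).trace.re| ≤ r * frobNorm (psqrt Λ - psqrt L) ∧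
    (r : ℝ) * frobNorm (psqrt Λ - psqrt L) ≤ r * Real.sqrt (traceNorm (Λ - L)) := by
  have hpΛ : psqrt Λ = hΛ.sqrt := by simp only [psqrt]; rw [dif_pos hΛ]; rfl
  have hpL : psqrt L = hL.sqrt := by simp only [psqrt]; rw [dif_pos hL]; rfl
  have hfrobneg : frobNorm (psqrt L - psqrt Λ) = frobNorm (psqrt Λ - psqrt L) := by
    simp only [frobNorm]
    congr 1
    rw [show psqrt L - psqrt Λ = -(psqrt Λ - psqrt L) from (neg_sub _ _).symm,
      conjTranspose_neg, neg_mul_neg]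
  have hfnonneg : 0 ≤ frobNorm (psqrt Λ - psqrt L) := Real.sqrt_nonneg _
  have hsr : Real.sqrt r ≤ (r : ℝ) := by
    calc Real.sqrt r ≤ Real.sqrt ((r : ℝ) ^ 2) := by
          apply Real.sqrt_le_sqrt
          exact_mod_cast Nat.le_self_pow two_ne_zero r
      _ = r := Real.sqrt_sq (Nat.cast_nonneg r)
  constructor
  · rw [abs_sub_le_iff]
    constructor
    · have h1 := tr_sqrt_sub_le hΛ hL hΛr
      rw [← hpΛ, ← hpL] at h1
      exact h1.trans (mul_le_mul_of_nonneg_right hsr hfnonneg)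
    · have h2 := tr_sqrt_sub_le hL hΛ hLr
      rw [← hpΛ, ← hpL, hfrobneg] at h2
      exact h2.trans (mul_le_mul_of_nonneg_right hsr hfnonneg)
  · have h3 := powers_stormer hΛ hL
    rw [← hpΛ, ← hpL] at h3
    exact mul_le_mul_of_nonneg_left h3 (Nat.cast_nonneg r)
end
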